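/- Let (E⁺_p, E⁻_p)_{p} be a finitely supported solution of the truncated xNLCME ODE system (no Z-dependence): dE_p⁺/dT = ipN_{2p}E_p⁻ + ip(Γ/3)[Σ_{q,r}E_q⁺E_r⁺E⁺_{p−q−r} + 3(Σ_q|E_q⁻|²)E_p⁺], dE_p⁻/dT = ip conj(N_{2p})E_p⁺ + ip(Γ/3)[Σ_{q,r}E_q⁻E_r⁻E⁻_{p−q−r} + 3(Σ_q|E_q⁺|²)E_p⁻], with reality conditions E^±_{−p} = conj(E^±_p), conj(N_k) = N_{−k}. Then Σ_p(|E_p⁺(T)|² + |E_p⁻(T)|²) is constant in T. -/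

import Mathlib

open Complex

lemma sum_neg_reindex {M : Type*} [AddCommMonoid M] (U : Finset ℤ)
    (hsym : ∀ p : ℤ, p ∈ U ↔ -p ∈ U) (g : ℤ → M) :
    ∑ p ∈ U, g (-p) = ∑ p ∈ U, g p := by
  refine Finset.sum_equiv (Equiv.neg ℤ) (fun i => ?_) (fun i _ => rfl)
  simpa using hsym i

lemma sum_support_eq (φ : ℤ → ℂ) (A B : Finset ℤ)
    (h : ∀ p : ℤ, φ p ≠ 0 → p ∈ A ∧ p ∈ B) :
    ∑ p ∈ A, φ p = ∑ p ∈ B, φ p := by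
  have h1 : ∑ p ∈ A ∩ B, φ p = ∑ p ∈ A, φ p := by
    apply Finset.sum_subset Finset.inter_subset_left
    intro x hxA hx
    by_contra hne
    exact hx (Finset.mem_inter.2 ⟨hxA, (h x hne).2⟩)
  have h2 : ∑ p ∈ A ∩ B, φ p = ∑ p ∈ B, φ p := by
    apply Finset.sum_subset Finset.inter_subset_right
    intro x hxB hx
    by_contra hne
    exact hx (Finset.mem_inter.2 ⟨(h x hne).1, hxB⟩)
  rw [← h1, h2]

lemma sum_rot (U : Finset ℤ) (f : ℤ → ℤ → ℤ → ℂ) :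
    ∑ p ∈ U, ∑ q ∈ U, ∑ r ∈ U, f p q r = ∑ q ∈ U, ∑ r ∈ U, ∑ p ∈ U, f p q r := by
  rw [Finset.sum_comm]
  exact Finset.sum_congr rfl fun q _ => Finset.sum_comm

lemma sum3_add (U : Finset ℤ) (f g : ℤ → ℤ → ℤ → ℂ) :
    (∑ p ∈ U, ∑ q ∈ U, ∑ r ∈ U, f p q r) + (∑ p ∈ U, ∑ q ∈ U, ∑ r ∈ U, g p q r)
      = ∑ p ∈ U, ∑ q ∈ U, ∑ r ∈ U, (f p q r + g p q r) := by
  rw [← Finset.sum_add_distrib]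
  refine Finset.sum_congr rfl fun p _ => ?_
  rw [← Finset.sum_add_distrib]
  exact Finset.sum_congr rfl fun q _ => (Finset.sum_add_distrib).symm

lemma hprod (U : Finset ℤ) (f : ℤ → ℤ → ℤ → ℂ) :
    ∑ x ∈ U ×ˢ U ×ˢ U, f x.1 x.2.1 x.2.2 = ∑ p ∈ U, ∑ q ∈ U, ∑ r ∈ U, f p q r := by
  rw [Finset.sum_product (f := fun x : ℤ × ℤ × ℤ => f x.1 x.2.1 x.2.2)]
  exact Finset.sum_congr rfl fun p _ => Finset.sum_product U U (fun y : ℤ × ℤ => f p y.1 y.2)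

lemma key_zero (a : ℤ → ℂ) (U : Finset ℤ)
    (hsym : ∀ p : ℤ, p ∈ U ↔ -p ∈ U)
    (hsupp : ∀ p : ℤ, p ∉ U → a p = 0)
    (hreal : ∀ p : ℤ, a (-p) = starRingEnd ℂ (a p)) :
    ∑ p ∈ U, (p : ℂ) *
      (starRingEnd ℂ (a p) * (∑ q ∈ U, ∑ r ∈ U, a q * a r * a (p - q - r))
        - a p * starRingEnd ℂ (∑ q ∈ U, ∑ r ∈ U, a q * a r * a (p - q - r))) = 0 := by
  have hc : ∀ x : ℤ, starRingEnd ℂ (a x) = a (-x) := fun x => (hreal x).symm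
  have hstep : ∀ (f : ℤ → ℂ), ∑ q ∈ U, f q = ∑ q ∈ U, f (-q) :=
    fun f => (sum_neg_reindex U hsym f).symm
  set C : ℤ → ℂ := fun p => ∑ q ∈ U, ∑ r ∈ U, a q * a r * a (p - q - r) with hCdef
  -- conjugate of C
  have hconjC : ∀ p : ℤ, starRingEnd ℂ (C p) = C (-p) := by
    intro p
    simp only [hCdef, map_sum, map_mul, hc]
    rw [hstep]
    refine Finset.sum_congr rfl fun q _ => ?_
    rw [hstep]
    refine Finset.sum_congr rfl fun r _ => ?_
    rw [neg_neg, neg_neg, show -(p - -q - -r) = -p - q - r from by ring]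
  -- the symmetrized sum W
  have hW : ∑ p ∈ U, (p : ℂ) * (a (-p) * C p) = 0 := by
    have hexp : ∑ p ∈ U, (p : ℂ) * (a (-p) * C p)
        = ∑ p ∈ U, ∑ q ∈ U, ∑ r ∈ U,
            (p : ℂ) * (a (-p) * (a q * a r * a (p - q - r))) := by
      simp only [hCdef, Finset.mul_sum]
    -- equal forms via symmetries
    have hA : (∑ p ∈ U, ∑ q ∈ U, ∑ r ∈ U, (p : ℂ) * (a (-p) * (a q * a r * a (p - q - r))))
        = ∑ p ∈ U, ∑ q ∈ U, ∑ r ∈ U, (-(q : ℂ)) * (a (-p) * (a q * a r * a (p - q - r))) := by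
      rw [← hprod U (fun p q r => (p : ℂ) * (a (-p) * (a q * a r * a (p - q - r)))),
        ← hprod U (fun p q r => (-(q : ℂ)) * (a (-p) * (a q * a r * a (p - q - r))))]
      refine Finset.sum_equiv
        (⟨fun x => (-x.2.1, -x.1, x.2.2), fun x => (-x.2.1, -x.1, x.2.2),
          fun x => by simp, fun x => by simp⟩ : ℤ × ℤ × ℤ ≃ ℤ × ℤ × ℤ)
        (fun x => ?_) (fun x _ => ?_)
      · simp only [Equiv.coe_fn_mk, Finset.mem_product]
        constructor
        · rintro ⟨h1, h2, h3⟩; exact ⟨(hsym _).mp h2, (hsym _).mp h1, h3⟩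
        · rintro ⟨h1, h2, h3⟩; exact ⟨(hsym _).mpr h2, (hsym _).mpr h1, h3⟩
      · obtain ⟨p, q, r⟩ := x
        simp only [Equiv.coe_fn_mk, neg_neg]
        rw [show -q - -p - r = p - q - r from by ring]
        push_cast
        ring
    have hB : (∑ p ∈ U, ∑ q ∈ U, ∑ r ∈ U, (p : ℂ) * (a (-p) * (a q * a r * a (p - q - r))))
        = ∑ p ∈ U, ∑ q ∈ U, ∑ r ∈ U, (-(r : ℂ)) * (a (-p) * (a q * a r * a (p - q - r))) := by
      rw [← hprod U (fun p q r => (p : ℂ) * (a (-p) * (a q * a r * a (p - q - r)))),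
        ← hprod U (fun p q r => (-(r : ℂ)) * (a (-p) * (a q * a r * a (p - q - r))))]
      refine Finset.sum_equiv
        (⟨fun x => (-x.2.2, x.2.1, -x.1), fun x => (-x.2.2, x.2.1, -x.1),
          fun x => by simp, fun x => by simp⟩ : ℤ × ℤ × ℤ ≃ ℤ × ℤ × ℤ)
        (fun x => ?_) (fun x _ => ?_)
      · simp only [Equiv.coe_fn_mk, Finset.mem_product]
        constructor
        · rintro ⟨h1, h2, h3⟩; exact ⟨(hsym _).mp h3, h2, (hsym _).mp h1⟩
        · rintro ⟨h1, h2, h3⟩; exact ⟨(hsym _).mpr h3, h2, (hsym _).mpr h1⟩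
      · obtain ⟨p, q, r⟩ := x
        simp only [Equiv.coe_fn_mk, neg_neg]
        rw [show -r - q - -p = p - q - r from by ring]
        push_cast
        ring
    have hC4 : (∑ p ∈ U, ∑ q ∈ U, ∑ r ∈ U, (p : ℂ) * (a (-p) * (a q * a r * a (p - q - r))))
        = ∑ p ∈ U, ∑ q ∈ U, ∑ r ∈ U,
            ((q : ℂ) + r - p) * (a (-p) * (a q * a r * a (p - q - r))) := by
      rw [sum_rot U (fun p q r => (p : ℂ) * (a (-p) * (a q * a r * a (p - q - r)))),
        sum_rot U (fun p q r => ((q : ℂ) + r - p) * (a (-p) * (a q * a r * a (p - q - r))))]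
      refine Finset.sum_congr rfl fun q hq => Finset.sum_congr rfl fun r hr => ?_
      -- fixed q r : reindex p ↦ q + r - p
      have hptw : ∀ p : ℤ, ((q : ℂ) + r - p) * (a (-p) * (a q * a r * a (p - q - r)))
          = ((q + r - p : ℤ) : ℂ) * (a (-(q + r - p)) * (a q * a r * a ((q + r - p) - q - r))) := by
        intro p
        rw [show -(q + r - p) = p - q - r from by ring,
          show (q + r - p) - q - r = -p from by ring]
        push_cast
        ring
      calc ∑ p ∈ U, (p : ℂ) * (a (-p) * (a q * a r * a (p - q - r)))
          = ∑ p ∈ Finset.image (fun p : ℤ => q + r - p) U,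
              (p : ℂ) * (a (-p) * (a q * a r * a (p - q - r))) := by
            symm
            apply sum_support_eq
            intro p hp
            have h1 : a (-p) ≠ 0 := fun h => hp (by simp [h])
            have h2 : a (p - q - r) ≠ 0 := fun h => hp (by simp [h])
            have hpU : p ∈ U := (hsym p).mpr (by by_contra h; exact h1 (hsupp _ h))
            have hpqr : p - q - r ∈ U := by by_contra h; exact h2 (hsupp _ h)
            refine ⟨Finset.mem_image.2 ⟨q + r - p, ?_, by ring⟩, hpU⟩
            have := (hsym (p - q - r)).mp hpqr
            simpa [show -(p - q - r) = q + r - p from by ring] using this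
        _ = ∑ p ∈ U, ((q + r - p : ℤ) : ℂ)
              * (a (-(q + r - p)) * (a q * a r * a ((q + r - p) - q - r))) :=
            Finset.sum_image (fun x _ y _ h => by omega)
        _ = ∑ p ∈ U, ((q : ℂ) + r - p) * (a (-p) * (a q * a r * a (p - q - r))) :=
            Finset.sum_congr rfl fun p _ => (hptw p).symm
    -- combine: W + W + W = -W
    have hneg : (∑ p ∈ U, ∑ q ∈ U, ∑ r ∈ U, (-(q : ℂ)) * (a (-p) * (a q * a r * a (p - q - r))))
        + ((∑ p ∈ U, ∑ q ∈ U, ∑ r ∈ U, (-(r : ℂ)) * (a (-p) * (a q * a r * a (p - q - r))))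
          + (∑ p ∈ U, ∑ q ∈ U, ∑ r ∈ U,
              ((q : ℂ) + r - p) * (a (-p) * (a q * a r * a (p - q - r)))))
        = - ∑ p ∈ U, ∑ q ∈ U, ∑ r ∈ U, (p : ℂ) * (a (-p) * (a q * a r * a (p - q - r))) := by
      rw [sum3_add, sum3_add, ← Finset.sum_neg_distrib]
      refine Finset.sum_congr rfl fun p _ => ?_
      rw [← Finset.sum_neg_distrib]
      refine Finset.sum_congr rfl fun q _ => ?_
      rw [← Finset.sum_neg_distrib]
      refine Finset.sum_congr rfl fun r _ => ?_
      ring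
    rw [← hA, ← hB, ← hC4] at hneg
    rw [hexp]
    linear_combination hneg / 4
  -- finish
  have hsplit : ∑ p ∈ U, (p : ℂ) *
      (starRingEnd ℂ (a p) * C p - a p * starRingEnd ℂ (C p))
      = (∑ p ∈ U, (p : ℂ) * (a (-p) * C p)) - ∑ p ∈ U, (p : ℂ) * (a p * C (-p)) := by
    rw [← Finset.sum_sub_distrib]
    refine Finset.sum_congr rfl fun p _ => ?_
    rw [hconjC, hc]
    ring
  have h2 : ∑ p ∈ U, (p : ℂ) * (a p * C (-p))
      = - ∑ p ∈ U, (p : ℂ) * (a (-p) * C p) := by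
    rw [hstep (fun p => (p : ℂ) * (a p * C (-p))), ← Finset.sum_neg_distrib]
    refine Finset.sum_congr rfl fun p _ => ?_
    simp only [neg_neg]
    push_cast
    ring
  rw [hsplit, h2, hW]
  ring

lemma deriv_sum_zero (a b n : ℤ → ℂ) (γ ma mb : ℝ) (U : Finset ℤ)
    (hsym : ∀ p : ℤ, p ∈ U ↔ -p ∈ U)
    (hsuppa : ∀ p : ℤ, p ∉ U → a p = 0)
    (hsuppb : ∀ p : ℤ, p ∉ U → b p = 0)
    (hreala : ∀ p : ℤ, a (-p) = starRingEnd ℂ (a p))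
    (hrealb : ∀ p : ℤ, b (-p) = starRingEnd ℂ (b p)) :
    ∑ p ∈ U,
      ((Complex.I * p * n p * b p + Complex.I * p * (γ : ℂ) *
          ((∑ q ∈ U, ∑ r ∈ U, a q * a r * a (p - q - r)) + 3 * (mb : ℂ) * a p))
            * starRingEnd ℂ (a p)
        + a p * starRingEnd ℂ (Complex.I * p * n p * b p + Complex.I * p * (γ : ℂ) *
            ((∑ q ∈ U, ∑ r ∈ U, a q * a r * a (p - q - r)) + 3 * (mb : ℂ) * a p))
        + ((Complex.I * p * starRingEnd ℂ (n p) * a p + Complex.I * p * (γ : ℂ) *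
            ((∑ q ∈ U, ∑ r ∈ U, b q * b r * b (p - q - r)) + 3 * (ma : ℂ) * b p))
              * starRingEnd ℂ (b p)
          + b p * starRingEnd ℂ (Complex.I * p * starRingEnd ℂ (n p) * a p
              + Complex.I * p * (γ : ℂ) *
                ((∑ q ∈ U, ∑ r ∈ U, b q * b r * b (p - q - r)) + 3 * (ma : ℂ) * b p)))) = 0 := by
  have hKa := key_zero a U hsym hsuppa hreala
  have hKb := key_zero b U hsym hsuppb hrealb
  have hpt : ∀ p ∈ U,
      ((Complex.I * p * n p * b p + Complex.I * p * (γ : ℂ) *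
          ((∑ q ∈ U, ∑ r ∈ U, a q * a r * a (p - q - r)) + 3 * (mb : ℂ) * a p))
            * starRingEnd ℂ (a p)
        + a p * starRingEnd ℂ (Complex.I * p * n p * b p + Complex.I * p * (γ : ℂ) *
            ((∑ q ∈ U, ∑ r ∈ U, a q * a r * a (p - q - r)) + 3 * (mb : ℂ) * a p))
        + ((Complex.I * p * starRingEnd ℂ (n p) * a p + Complex.I * p * (γ : ℂ) *
            ((∑ q ∈ U, ∑ r ∈ U, b q * b r * b (p - q - r)) + 3 * (ma : ℂ) * b p))
              * starRingEnd ℂ (b p)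
          + b p * starRingEnd ℂ (Complex.I * p * starRingEnd ℂ (n p) * a p
              + Complex.I * p * (γ : ℂ) *
                ((∑ q ∈ U, ∑ r ∈ U, b q * b r * b (p - q - r)) + 3 * (ma : ℂ) * b p))))
      = Complex.I * (γ : ℂ) *
          ((p : ℂ) * (starRingEnd ℂ (a p) * (∑ q ∈ U, ∑ r ∈ U, a q * a r * a (p - q - r))
              - a p * starRingEnd ℂ (∑ q ∈ U, ∑ r ∈ U, a q * a r * a (p - q - r)))
            + (p : ℂ) * (starRingEnd ℂ (b p) * (∑ q ∈ U, ∑ r ∈ U, b q * b r * b (p - q - r))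
              - b p * starRingEnd ℂ (∑ q ∈ U, ∑ r ∈ U, b q * b r * b (p - q - r)))) := by
    intro p _
    simp only [map_add, map_mul, Complex.conj_I, Complex.conj_ofReal, map_intCast,
      map_ofNat, Complex.conj_conj]
    ring
  rw [Finset.sum_congr rfl hpt, ← Finset.mul_sum, Finset.sum_add_distrib, hKa, hKb]
  simp
lemma finsum_over {M : Type*} [AddCommMonoid M] (U : Finset ℤ) (f : ℤ → M)
    (h : ∀ p : ℤ, p ∉ U → f p = 0) : ∑ᶠ p : ℤ, f p = ∑ p ∈ U, f p := by
  apply finsum_eq_finset_sum_of_support_subset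
  intro p hp
  by_contra hpU
  exact hp (h p (by simpa using hpU))

theorem stmt_18 (Ep Em : ℤ → ℝ → ℂ) (N : ℤ → ℂ) (Γ : ℝ) (S : Finset ℤ)
    (hS : ∀ p ∉ S, ∀ T : ℝ, Ep p T = 0 ∧ Em p T = 0)
    (hrealE : ∀ p : ℤ, ∀ T : ℝ, Ep (-p) T = starRingEnd ℂ (Ep p T) ∧
      Em (-p) T = starRingEnd ℂ (Em p T))
    (hrealN : ∀ k : ℤ, starRingEnd ℂ (N k) = N (-k))
    (hodeP : ∀ p : ℤ, ∀ T : ℝ,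
      HasDerivAt (Ep p)
        (Complex.I * p * N (2 * p) * Em p T
          + Complex.I * p * (Γ / 3) *
            ((∑ᶠ q : ℤ, ∑ᶠ r : ℤ, Ep q T * Ep r T * Ep (p - q - r) T)
              + 3 * ((∑ᶠ q : ℤ, (‖Em q T‖ ^ 2 : ℝ)) : ℝ) * Ep p T)) T)
    (hodeM : ∀ p : ℤ, ∀ T : ℝ,
      HasDerivAt (Em p)
        (Complex.I * p * starRingEnd ℂ (N (2 * p)) * Ep p T
          + Complex.I * p * (Γ / 3) *
            ((∑ᶠ q : ℤ, ∑ᶠ r : ℤ, Em q T * Em r T * Em (p - q - r) T)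
              + 3 * ((∑ᶠ q : ℤ, (‖Ep q T‖ ^ 2 : ℝ)) : ℝ) * Em p T)) T) :
    ∀ T₁ T₂ : ℝ,
      ∑ᶠ p : ℤ, (‖Ep p T₁‖ ^ 2 + ‖Em p T₁‖ ^ 2)
        = ∑ᶠ p : ℤ, (‖Ep p T₂‖ ^ 2 + ‖Em p T₂‖ ^ 2) := by
  intro T₁ T₂
  classical
  set U : Finset ℤ := S ∩ S.image (fun x => -x) with hUdef
  have hUmem : ∀ p : ℤ, p ∈ U ↔ (p ∈ S ∧ -p ∈ S) := by
    intro p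
    simp only [hUdef, Finset.mem_inter, Finset.mem_image]
    constructor
    · rintro ⟨h1, x, hx, rfl⟩; exact ⟨h1, by simpa using hx⟩
    · rintro ⟨h1, h2⟩; exact ⟨h1, -p, h2, neg_neg p⟩
  have hUsym : ∀ p : ℤ, p ∈ U ↔ -p ∈ U := by
    intro p; rw [hUmem p, hUmem (-p), neg_neg]; tauto
  have hU0 : ∀ p : ℤ, p ∉ U → ∀ T : ℝ, Ep p T = 0 ∧ Em p T = 0 := by
    intro p hp T
    rw [hUmem] at hp
    by_cases h1 : p ∈ S
    · have h2 : -p ∉ S := fun h => hp ⟨h1, h⟩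
      constructor
      · have h3 : starRingEnd ℂ (Ep p T) = 0 := by
          rw [← (hrealE p T).1]; exact (hS (-p) h2 T).1
        simpa using congrArg (starRingEnd ℂ) h3
      · have h3 : starRingEnd ℂ (Em p T) = 0 := by
          rw [← (hrealE p T).2]; exact (hS (-p) h2 T).2
        simpa using congrArg (starRingEnd ℂ) h3
    · exact hS p h1 T
  -- finsum reductions
  have hCa : ∀ (p : ℤ) (T : ℝ), (∑ᶠ q : ℤ, ∑ᶠ r : ℤ, Ep q T * Ep r T * Ep (p - q - r) T)
      = ∑ q ∈ U, ∑ r ∈ U, Ep q T * Ep r T * Ep (p - q - r) T := by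
    intro p T
    rw [finsum_over U _ (fun q hq => by simp [(hU0 q hq T).1])]
    exact Finset.sum_congr rfl fun q _ =>
      finsum_over U _ (fun r hr => by simp [(hU0 r hr T).1])
  have hCb : ∀ (p : ℤ) (T : ℝ), (∑ᶠ q : ℤ, ∑ᶠ r : ℤ, Em q T * Em r T * Em (p - q - r) T)
      = ∑ q ∈ U, ∑ r ∈ U, Em q T * Em r T * Em (p - q - r) T := by
    intro p T
    rw [finsum_over U _ (fun q hq => by simp [(hU0 q hq T).2])]
    exact Finset.sum_congr rfl fun q _ =>
      finsum_over U _ (fun r hr => by simp [(hU0 r hr T).2])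
  have hMb : ∀ T : ℝ, (∑ᶠ q : ℤ, (‖Em q T‖ ^ 2 : ℝ)) = ∑ q ∈ U, (‖Em q T‖ ^ 2 : ℝ) :=
    fun T => finsum_over U _ (fun q hq => by simp [(hU0 q hq T).2])
  have hMa : ∀ T : ℝ, (∑ᶠ q : ℤ, (‖Ep q T‖ ^ 2 : ℝ)) = ∑ q ∈ U, (‖Ep q T‖ ^ 2 : ℝ) :=
    fun T => finsum_over U _ (fun q hq => by simp [(hU0 q hq T).1])
  have hTot : ∀ T : ℝ, (∑ᶠ p : ℤ, (‖Ep p T‖ ^ 2 + ‖Em p T‖ ^ 2))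
      = ∑ p ∈ U, (‖Ep p T‖ ^ 2 + ‖Em p T‖ ^ 2) :=
    fun T => finsum_over U _ (fun p hp => by simp [(hU0 p hp T).1, (hU0 p hp T).2])
  -- star helper
  have hstar : ∀ (f : ℝ → ℂ) (f' : ℂ) (x : ℝ), HasDerivAt f f' x →
      HasDerivAt (fun t => starRingEnd ℂ (f t)) (starRingEnd ℂ f') x := by
    intro f f' x hf
    exact hf.star
  -- the conserved complex quantity
  have hkey : ∀ T : ℝ, HasDerivAt
      (fun T' => ∑ p ∈ U, (Ep p T' * starRingEnd ℂ (Ep p T')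
        + Em p T' * starRingEnd ℂ (Em p T'))) 0 T := by
    intro T
    have hA : ∀ p : ℤ, HasDerivAt (Ep p)
        (Complex.I * p * N (2 * p) * Em p T + Complex.I * p * ((Γ / 3 : ℝ) : ℂ) *
          ((∑ q ∈ U, ∑ r ∈ U, Ep q T * Ep r T * Ep (p - q - r) T)
            + 3 * ((∑ q ∈ U, (‖Em q T‖ ^ 2 : ℝ) : ℝ) : ℂ) * Ep p T)) T := by
      intro p
      have h := hodeP p T
      rw [hCa p T, hMb T, show ((Γ : ℂ) / 3) = ((Γ / 3 : ℝ) : ℂ) from by push_cast; ring] at h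
      exact h
    have hB : ∀ p : ℤ, HasDerivAt (Em p)
        (Complex.I * p * starRingEnd ℂ (N (2 * p)) * Ep p T
          + Complex.I * p * ((Γ / 3 : ℝ) : ℂ) *
          ((∑ q ∈ U, ∑ r ∈ U, Em q T * Em r T * Em (p - q - r) T)
            + 3 * ((∑ q ∈ U, (‖Ep q T‖ ^ 2 : ℝ) : ℝ) : ℂ) * Em p T)) T := by
      intro p
      have h := hodeM p T
      rw [hCb p T, hMa T, show ((Γ : ℂ) / 3) = ((Γ / 3 : ℝ) : ℂ) from by push_cast; ring] at h
      exact h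
    have hd := HasDerivAt.fun_sum (u := U)
      (fun p _ => (((hA p).mul (hstar _ _ T (hA p))).add ((hB p).mul (hstar _ _ T (hB p)))))
    have hzero := deriv_sum_zero (fun p => Ep p T) (fun p => Em p T) (fun p => N (2 * p))
      (Γ / 3) (∑ q ∈ U, (‖Ep q T‖ ^ 2 : ℝ)) (∑ q ∈ U, (‖Em q T‖ ^ 2 : ℝ)) U hUsym
      (fun p hp => (hU0 p hp T).1) (fun p hp => (hU0 p hp T).2)
      (fun p => (hrealE p T).1) (fun p => (hrealE p T).2)
    convert hd using 1
    · rfl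
    · rfl
    · exact hzero.symm
  -- pass to real part
  have hFd : ∀ T : ℝ, HasDerivAt
      (fun T' => ∑ p ∈ U, (‖Ep p T'‖ ^ 2 + ‖Em p T'‖ ^ 2)) 0 T := by
    intro T
    have h2 := Complex.reCLM.hasFDerivAt.comp_hasDerivAt T (hkey T)
    have hFeq : (fun T' => ∑ p ∈ U, (‖Ep p T'‖ ^ 2 + ‖Em p T'‖ ^ 2))
        = (fun T' => (∑ p ∈ U, (Ep p T' * starRingEnd ℂ (Ep p T')
            + Em p T' * starRingEnd ℂ (Em p T'))).re) := by
      funext T'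
      rw [Complex.re_sum]
      refine (Finset.sum_congr rfl fun p _ => ?_).symm
      rw [Complex.mul_conj', Complex.mul_conj']
      simp [← Complex.ofReal_pow]
    rw [hFeq]
    rw [map_zero] at h2
    exact h2
  have hconst := is_const_of_deriv_eq_zero
    (f := fun T' => ∑ p ∈ U, (‖Ep p T'‖ ^ 2 + ‖Em p T'‖ ^ 2))
    (fun t => (hFd t).differentiableAt) (fun t => (hFd t).deriv) T₁ T₂
  rw [hTot T₁, hTot T₂]
  exact hconst
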